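/- For q ≥ 2, m ≥ 2n·log₂ q, for all but at most a q^(-0.16n) fraction of matrices A ∈ (ℤ/qℤ)^(n×m), the q-ary lattice L_q(A) = {x ∈ ℤ^m : ∃ s ∈ ℤ^n, x ≡ Aᵀs (mod q)} has λ₁^∞(L_q(A)) ≥ q/4, i.e., every nonzero vector of L_q(A) has ℓ∞-norm at least q/4. -/

import Mathlib

open Finset



lemma key058 : (0.58:ℝ) ≤ Real.logb 2 (8/5) := by
  rw [Real.le_logb_iff_rpow_le one_lt_two (by norm_num)]
  have h50 : ((2:ℝ) ^ (0.58:ℝ)) ^ (50:ℕ) ≤ ((8:ℝ)/5) ^ (50:ℕ) := by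
    rw [← Real.rpow_natCast ((2:ℝ) ^ (0.58:ℝ)) 50, ← Real.rpow_mul (by norm_num)]
    rw [show (0.58:ℝ) * (50:ℕ) = ((29:ℕ):ℝ) by norm_num, Real.rpow_natCast]
    norm_num
  exact le_of_pow_le_pow_left₀ (by norm_num) (by norm_num) h50

lemma analytic_bound (n m q : ℕ) (hq : 2 ≤ q) (hm : 2 * n * Real.logb 2 q ≤ m) :
    (q:ℝ)^(n:ℕ) * (5/8:ℝ)^(m:ℕ) ≤ (q:ℝ) ^ (-(0.16) * (n:ℝ)) := by
  have hq1 : (1:ℝ) < q := by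
    have : (2:ℝ) ≤ q := by exact_mod_cast hq
    linarith
  have hq0 : (0:ℝ) < q := by linarith
  have hlogq : 0 ≤ Real.logb 2 q := Real.logb_nonneg one_lt_two (by linarith)
  have e1 : (q:ℝ)^(n:ℕ) = (2:ℝ) ^ (Real.logb 2 q * n) := by
    rw [Real.rpow_mul (by norm_num), Real.rpow_logb (by norm_num) (by norm_num) hq0, Real.rpow_natCast]
  have e2 : ((5:ℝ)/8)^(m:ℕ) = (2:ℝ) ^ (Real.logb 2 (5/8) * m) := by
    rw [Real.rpow_mul (by norm_num), Real.rpow_logb (by norm_num) (by norm_num) (by norm_num), Real.rpow_natCast]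
  have e3 : (q:ℝ) ^ (-(0.16) * (n:ℝ)) = (2:ℝ) ^ (Real.logb 2 q * (-(0.16) * n)) := by
    rw [Real.rpow_mul (by norm_num : (0:ℝ) ≤ 2), Real.rpow_logb (by norm_num) (by norm_num) hq0]
  rw [e1, e2, e3, ← Real.rpow_add (by norm_num : (0:ℝ) < 2)]
  apply Real.rpow_le_rpow_of_exponent_le (by norm_num)
  have h58 : Real.logb 2 (5/8) = - Real.logb 2 (8/5) := by
    rw [show (5/8:ℝ) = (8/5:ℝ)⁻¹ by norm_num, Real.logb_inv]
  rw [h58]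
  have hkey := key058
  have hm0 : (0:ℝ) ≤ m := Nat.cast_nonneg m
  nlinarith [mul_le_mul_of_nonneg_right hm (by norm_num : (0:ℝ) ≤ 0.58),
    mul_nonneg (sub_nonneg.2 hkey) hm0]



lemma count_k (J d q : ℕ) (hJ : 2 ≤ J) (hd : 1 ≤ d) (hq : q = J * d) :
    8 * ((Finset.range J).filter (fun k => 4 * (k * d) < q ∨ 4 * (q - k * d) < q)).card ≤ 5 * J := by
  have hsub : (Finset.range J).filter (fun k => 4 * (k * d) < q ∨ 4 * (q - k * d) < q) ⊆
      Finset.range ((J+3)/4) ∪ Finset.Ico (J - ((J+3)/4 - 1)) J := by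
    intro k hk
    simp only [mem_filter, mem_range, mem_union, mem_Ico] at *
    obtain ⟨hkJ, h1 | h2⟩ := hk
    · left
      have h1' : (4 * k) * d < J * d := by rw [hq] at h1; linarith [h1]
      have h4k : 4 * k < J := lt_of_mul_lt_mul_right h1' (Nat.zero_le d)
      omega
    · right
      have hsub2 : q - k * d = (J - k) * d := by rw [hq, Nat.sub_mul]
      rw [hsub2] at h2
      have h2' : (4 * (J - k)) * d < J * d := by rw [hq] at h2; linarith [h2]
      have h4k : 4 * (J - k) < J := lt_of_mul_lt_mul_right h2' (Nat.zero_le d)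
      omega
  have hcard := Finset.card_le_card hsub
  have hcard2 := Finset.card_union_le (Finset.range ((J+3)/4)) (Finset.Ico (J - ((J+3)/4 - 1)) J)
  rw [Finset.card_range, Nat.card_Ico] at hcard2
  omega

lemma mem_T (q : ℕ) [NeZero q] (c : ZMod q) (t : ℤ) (ht : 4 * |t| < (q:ℤ)) (htc : (t : ZMod q) = c) :
    4 * c.val < q ∨ 4 * (q - c.val) < q := by
  rcases le_or_gt 0 t with h | h
  · left
    lift t to ℕ using h with t'
    rw [abs_of_nonneg (by positivity)] at ht
    have htq : t' < q := by exact_mod_cast (by linarith : (t':ℤ) < q)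
    have hval : c.val = t' := by
      rw [← htc]
      push_cast
      exact ZMod.val_cast_of_lt htq
    omega
  · right
    have hneg : |t| = -t := abs_of_neg h
    rw [hneg] at ht
    have hpos : 0 ≤ t + q := by linarith
    set u := (t + q).toNat with hu
    have hu' : (u:ℤ) = t + q := Int.toNat_of_nonneg hpos
    have hcu : ((u:ℕ) : ZMod q) = c := by
      rw [← htc]
      have : ((u:ℕ) : ZMod q) = (((u:ℕ):ℤ) : ZMod q) := by push_cast; ring
      rw [this, hu']
      push_cast
      simp
    have huq : u < q := by omega
    have hval : c.val = u := by rw [← hcu]; exact ZMod.val_cast_of_lt huq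
    omega



lemma count_TK (q J d : ℕ) [NeZero q] (hJ : 2 ≤ J) (hd : 1 ≤ d) (hqJ : q = J * d) :
    8 * (Finset.univ.filter (fun c : ZMod q =>
      d ∣ c.val ∧ (4 * c.val < q ∨ 4 * (q - c.val) < q))).card ≤ 5 * J := by
  have hinj : ((Finset.univ.filter (fun c : ZMod q =>
      d ∣ c.val ∧ (4 * c.val < q ∨ 4 * (q - c.val) < q))).card ≤
      ((Finset.range J).filter (fun k => 4 * (k * d) < q ∨ 4 * (q - k * d) < q)).card) := by
    apply Finset.card_le_card_of_injOn (fun c => c.val / d)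
    · intro c hc
      simp only [mem_coe, mem_filter, mem_univ, true_and, mem_range] at *
      obtain ⟨⟨e, he⟩, hor⟩ := hc
      have hmul : c.val / d * d = c.val := Nat.div_mul_cancel ⟨e, he⟩
      have hvq : c.val < q := ZMod.val_lt c
      constructor
      · have : c.val / d * d < J * d := by omega
        exact lt_of_mul_lt_mul_right this (Nat.zero_le d)
      · rw [hmul]; exact hor
    · intro c1 h1 c2 h2 heq
      simp only [coe_filter, Set.mem_setOf_eq, mem_univ, true_and] at h1 h2
      have e1 : c1.val / d * d = c1.val := Nat.div_mul_cancel h1.1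
      have e2 : c2.val / d * d = c2.val := Nat.div_mul_cancel h2.1
      have heq' : c1.val / d * d = c2.val / d * d := by
        simpa using congrArg (· * d) heq
      rw [e1, e2] at heq'
      exact ZMod.val_injective q heq'
  calc 8 * _ ≤ 8 * ((Finset.range J).filter
        (fun k => 4 * (k * d) < q ∨ 4 * (q - k * d) < q)).card := by omega
    _ ≤ 5 * J := count_k J d q hJ hd hqJ



lemma col_count (n q : ℕ) [NeZero q] (s : Fin n → ZMod q) (hs : s ≠ 0) :
    8 * (Finset.univ.filter (fun a : Fin n → ZMod q =>
        4 * (∑ i, a i * s i).val < q ∨ 4 * (q - (∑ i, a i * s i).val) < q)).card ≤ 5 * q ^ n := by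
  classical
  have hq1 : 1 ≤ q := Nat.one_le_iff_ne_zero.2 (NeZero.ne q)
  set φ : (Fin n → ZMod q) →+ ZMod q := AddMonoidHom.mk' (fun a => ∑ i, a i * s i) (by
    intro a b
    simp [add_mul, Finset.sum_add_distrib]) with hφ
  have hφa : ∀ a : Fin n → ZMod q, φ a = ∑ i, a i * s i := fun a => rfl
  set T : Finset (ZMod q) := Finset.univ.filter
      (fun c : ZMod q => 4 * c.val < q ∨ 4 * (q - c.val) < q) with hT
  set R : Finset (ZMod q) := Finset.univ.filter (fun c => c ∈ φ.range) with hR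
  set K : ℕ := (Finset.univ.filter (fun a : Fin n → ZMod q => φ a = 0)).card with hK
  set J : ℕ := R.card with hJdef
  -- fiber bound
  have fiber_le : ∀ c : ZMod q, (univ.filter (fun a : Fin n → ZMod q => φ a = c)).card ≤ K := by
    intro c
    by_cases hc : ∃ a₀, φ a₀ = c
    · obtain ⟨a₀, ha₀⟩ := hc
      apply Finset.card_le_card_of_injOn (fun x => x - a₀)
      · intro x hx
        simp only [mem_coe, mem_filter, mem_univ, true_and] at *
        rw [map_sub, hx, ha₀, sub_self]
      · intro x _ y _ h
        exact sub_left_injective h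
    · push_neg at hc
      have he : (univ.filter (fun a : Fin n → ZMod q => φ a = c)) = ∅ :=
        Finset.filter_eq_empty_iff.2 (fun {a} _ => hc a)
      simp [he]
  -- main fiberwise decomposition
  have hG : (univ.filter (fun a : Fin n → ZMod q => φ a ∈ T)).card ≤ (T ∩ R).card * K := by
    rw [Finset.card_eq_sum_card_fiberwise
      (f := fun a => φ a) (t := T)
      (fun a ha => by simpa using (Finset.mem_filter.1 ha).2)]
    have hzero : ∀ c ∈ T, c ∉ T ∩ R →
        ((univ.filter (fun a : Fin n → ZMod q => φ a ∈ T)).filter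
          (fun a => φ a = c)).card = 0 := by
      intro c hcT hcR
      have hcnr : c ∉ R := fun h => hcR (Finset.mem_inter.2 ⟨hcT, h⟩)
      simp only [hR, mem_filter, mem_univ, true_and, AddMonoidHom.mem_range] at hcnr
      push_neg at hcnr
      rw [Finset.card_eq_zero]
      apply Finset.filter_eq_empty_iff.2
      intro a _
      exact fun h => hcnr a h
    rw [← Finset.sum_subset (Finset.inter_subset_left) hzero]
    calc ∑ c ∈ T ∩ R, ((univ.filter (fun a : Fin n → ZMod q => φ a ∈ T)).filter
          (fun a => φ a = c)).card
        ≤ ∑ c ∈ T ∩ R, K := by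
          apply Finset.sum_le_sum
          intro c _
          exact le_trans (Finset.card_le_card (Finset.filter_subset_filter _
            (Finset.filter_subset _ _))) (fiber_le c)
      _ = (T ∩ R).card * K := by rw [Finset.sum_const, smul_eq_mul]
  -- J ≥ 2
  have hJ2 : 2 ≤ J := by
    obtain ⟨i, hi⟩ := Function.ne_iff.1 hs
    have h0 : (0 : ZMod q) ∈ R := by
      simp [hR, AddMonoidHom.mem_range]
      exact ⟨0, by simp [hφa]⟩
    have hsi : s i ∈ R := by
      simp only [hR, mem_filter, mem_univ, true_and, AddMonoidHom.mem_range]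
      refine ⟨Pi.single i 1, ?_⟩
      rw [hφa]
      simp [Pi.single_apply, ite_mul]
    rw [hJdef]
    rw [show (2:ℕ) = 1 + 1 by rfl]
    apply Finset.one_lt_card.2
    exact ⟨0, h0, s i, hsi, fun h => hi (by simpa using h.symm)⟩
  -- J divides q
  have hcardR : J = Nat.card φ.range := by
    rw [hJdef, hR, ← Fintype.card_subtype (fun c : ZMod q => c ∈ φ.range)]
    exact (@Nat.card_eq_fintype_card {c // c ∈ φ.range} φ.fintypeRange).symm
  have hJq : J ∣ q := by
    rw [hcardR]
    have := AddSubgroup.card_addSubgroup_dvd_card φ.range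
    simpa [Nat.card_eq_fintype_card, ZMod.card] using this
  obtain ⟨d, hqJd⟩ := hJq
  have hd1 : 1 ≤ d := by
    rcases Nat.eq_zero_or_pos d with h | h
    · subst h; omega
    · exact h
  -- membership in range gives divisibility
  have hmemdvd : ∀ c : ZMod q, c ∈ φ.range → d ∣ c.val := by
    intro c hc
    have h1 : (Nat.card φ.range) • (⟨c, hc⟩ : φ.range) = 0 := by
      rw [Nat.card_eq_fintype_card]
      exact card_nsmul_eq_zero
    have h2 : (J : ZMod q) * c = 0 := by
      have := congrArg (AddSubgroup.subtype φ.range) h1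
      simp only [map_nsmul, map_zero] at this
      rw [hcardR]
      rw [← nsmul_eq_mul]
      simpa using this
    have h3 : ((J * c.val : ℕ) : ZMod q) = 0 := by
      push_cast
      rw [ZMod.natCast_val, ZMod.cast_id]
      exact h2
    have h4 : q ∣ J * c.val := (ZMod.natCast_eq_zero_iff _ _).1 h3
    obtain ⟨e, he⟩ := h4
    refine ⟨e, ?_⟩
    have hJe : J * c.val = J * (d * e) := by rw [he, hqJd]; ring
    exact Nat.eq_of_mul_eq_mul_left (by omega) hJe
  -- T ∩ R is small
  have hTR : 8 * (T ∩ R).card ≤ 5 * J := by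
    have hsub : T ∩ R ⊆ Finset.univ.filter (fun c : ZMod q =>
        d ∣ c.val ∧ (4 * c.val < q ∨ 4 * (q - c.val) < q)) := by
      intro c hc
      obtain ⟨hcT, hcR⟩ := Finset.mem_inter.1 hc
      simp only [hT, mem_filter, mem_univ, true_and] at hcT
      simp only [hR, mem_filter, mem_univ, true_and] at hcR
      simp only [mem_filter, mem_univ, true_and]
      exact ⟨hmemdvd c hcR, hcT⟩
    calc 8 * (T ∩ R).card ≤ 8 * (Finset.univ.filter (fun c : ZMod q =>
        d ∣ c.val ∧ (4 * c.val < q ∨ 4 * (q - c.val) < q))).card := by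
          have := Finset.card_le_card hsub; omega
      _ ≤ 5 * J := count_TK q J d hJ2 hd1 hqJd
  -- J * K = q ^ n
  have hJK : J * K = q ^ n := by
    have h1 : Nat.card (Fin n → ZMod q) = Nat.card ((Fin n → ZMod q) ⧸ φ.ker) * Nat.card φ.ker :=
      AddSubgroup.card_eq_card_quotient_mul_card_addSubgroup φ.ker
    have h2 : Nat.card ((Fin n → ZMod q) ⧸ φ.ker) = Nat.card φ.range :=
      Nat.card_congr (QuotientAddGroup.quotientKerEquivRange φ).toEquiv
    have h3 : Nat.card φ.ker = K := by
      rw [Nat.card_eq_fintype_card, hK]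
      rw [Fintype.card_subtype]
      congr 1
      ext a
      simp [AddMonoidHom.mem_ker]
    have h4 : Nat.card (Fin n → ZMod q) = q ^ n := by
      rw [Nat.card_eq_fintype_card, Fintype.card_fun, ZMod.card, Fintype.card_fin]
    rw [h2, h3, h4, ← hcardR] at h1
    omega
  -- conclude
  have hfinal : (univ.filter (fun a : Fin n → ZMod q => φ a ∈ T)).card =
      (Finset.univ.filter (fun a : Fin n → ZMod q =>
        4 * (∑ i, a i * s i).val < q ∨ 4 * (q - (∑ i, a i * s i).val) < q)).card := by
    have he : (univ.filter (fun a : Fin n → ZMod q => φ a ∈ T)) =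
        (Finset.univ.filter (fun a : Fin n → ZMod q =>
          4 * (∑ i, a i * s i).val < q ∨ 4 * (q - (∑ i, a i * s i).val) < q)) := by
      ext a
      simp [hT, hφa]
    rw [he]
  rw [← hfinal]
  calc 8 * (univ.filter (fun a : Fin n → ZMod q => φ a ∈ T)).card
      ≤ 8 * ((T ∩ R).card * K) := Nat.mul_le_mul_left 8 hG
    _ = (8 * (T ∩ R).card) * K := by ring
    _ ≤ (5 * J) * K := Nat.mul_le_mul_right K hTR
    _ = 5 * (J * K) := by ring
    _ = 5 * q ^ n := by rw [hJK]



lemma matrix_col_card {α : Type*} [Fintype α] (n m : ℕ) (P : (Fin n → α) → Prop)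
    [DecidablePred P] :
    (univ.filter (fun A : Matrix (Fin n) (Fin m) α => ∀ j, P (fun i => A i j))).card
      = ((univ.filter P).card) ^ m := by
  classical
  have e : {A : Matrix (Fin n) (Fin m) α // ∀ j, P (fun i => A i j)}
      ≃ (Fin m → {v : Fin n → α // P v}) :=
    (Equiv.subtypeEquiv (Equiv.piComm (fun _ _ => α)) (fun A => Iff.rfl)).trans
      (Equiv.subtypePiEquivPi)
  calc (univ.filter (fun A : Matrix (Fin n) (Fin m) α => ∀ j, P (fun i => A i j))).card
      = Fintype.card {A : Matrix (Fin n) (Fin m) α // ∀ j, P (fun i => A i j)} :=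
        (Fintype.card_subtype _).symm
    _ = Fintype.card (Fin m → {v : Fin n → α // P v}) := Fintype.card_congr e
    _ = (Fintype.card {v : Fin n → α // P v}) ^ m := by
        rw [Fintype.card_fun, Fintype.card_fin]
    _ = ((univ.filter P).card) ^ m := by rw [Fintype.card_subtype]



/-- For `q ≥ 2` and `m ≥ 2n·log₂ q`, for all but at most a `q^(-0.16n)` fraction of
matrices `A ∈ (ℤ/qℤ)^(n×m)` (i.e. the number of bad matrices is at most
`q^(-0.16n) · q^(nm)`), every nonzero vector of the `q`-ary lattice
`L_q(A) = {x ∈ ℤ^m : ∃ s, x ≡ Aᵀs (mod q)}` has `ℓ∞`-norm at least `q/4`. -/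
theorem stmt_1 (n m q : ℕ) (hq : 2 ≤ q) (hm : 2 * n * Real.logb 2 q ≤ m) :
    (Nat.card {A : Matrix (Fin n) (Fin m) (ZMod q) //
        ¬ ∀ x : Fin m → ℤ, x ≠ 0 →
          (∃ s : Fin n → ZMod q, ∀ j, ((x j : ZMod q)) = ∑ i, A i j * s i) →
          ∃ j, (q : ℝ) / 4 ≤ |(x j : ℝ)|} : ℝ)
      ≤ (q : ℝ) ^ (-(0.16) * (n : ℝ)) * (q : ℝ) ^ (n * m) := by
  haveI : NeZero q := ⟨by omega⟩
  classical
  set bad : Matrix (Fin n) (Fin m) (ZMod q) → Prop := fun A => ¬ ∀ x : Fin m → ℤ, x ≠ 0 →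
      (∃ s : Fin n → ZMod q, ∀ j, ((x j : ZMod q)) = ∑ i, A i j * s i) →
      ∃ j, (q : ℝ) / 4 ≤ |(x j : ℝ)| with hbad
  set P : (Fin n → ZMod q) → (Fin n → ZMod q) → Prop := fun s v =>
      4 * (∑ i, v i * s i).val < q ∨ 4 * (q - (∑ i, v i * s i).val) < q with hP
  set S : Finset (Fin n → ZMod q) := univ.filter (fun s => s ≠ 0) with hS
  set B : (Fin n → ZMod q) → Finset (Matrix (Fin n) (Fin m) (ZMod q)) := fun s =>
      univ.filter (fun A => ∀ j, P s (fun i => A i j)) with hB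
  -- card of bad set
  have hcard : (Nat.card {A : Matrix (Fin n) (Fin m) (ZMod q) // bad A}) = (univ.filter bad).card := by
    rw [← Fintype.card_subtype bad]
    exact @Nat.card_eq_fintype_card _ (Subtype.fintype _)
  -- subset of union
  have hsub : univ.filter bad ⊆ S.biUnion B := by
    intro A hA
    simp only [mem_filter, mem_univ, true_and, hbad] at hA
    push_neg at hA
    obtain ⟨x, hx0, ⟨s, hxs⟩, hsmall⟩ := hA
    have hxint : ∀ j, 4 * |x j| < (q:ℤ) := by
      intro j
      have h := hsmall j
      have : (4:ℝ) * |(x j : ℝ)| < q := by linarith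
      exact_mod_cast (by push_cast; exact this : ((4 * |x j| : ℤ):ℝ) < ((q:ℤ):ℝ))
    have hs0 : s ≠ 0 := by
      rintro rfl
      apply hx0
      funext j
      have h1 : ((x j : ZMod q)) = 0 := by simpa using hxs j
      have h2 : (q:ℤ) ∣ x j := by
        rwa [ZMod.intCast_zmod_eq_zero_iff_dvd] at h1
      have h3 := hxint j
      obtain ⟨k, hk⟩ := h2
      simp only [Pi.zero_apply]
      rcases lt_trichotomy k 0 with hc | hc | hc
      · nlinarith [abs_of_nonpos (by nlinarith : x j ≤ 0)]
      · simp [hk, hc]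
      · nlinarith [abs_of_nonneg (by nlinarith : 0 ≤ x j)]
    apply Finset.mem_biUnion.2
    refine ⟨s, by simp [hS, hs0], ?_⟩
    simp only [hB, mem_filter, mem_univ, true_and]
    intro j
    exact mem_T q _ (x j) (hxint j) (hxs j)
  -- counting
  have hBs : ∀ s, (B s).card = ((univ.filter (P s)).card) ^ m := fun s =>
    matrix_col_card n m (P s)
  have hgs : ∀ s : Fin n → ZMod q, s ≠ 0 → ((univ.filter (P s)).card : ℝ) ≤ 5/8 * (q:ℝ)^(n:ℕ) := by
    intro s hs
    have h := col_count n q s hs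
    have h' : (8:ℝ) * ((univ.filter (P s)).card : ℝ) ≤ 5 * (q:ℝ)^(n:ℕ) := by
      exact_mod_cast h
    linarith
  have hnat : (univ.filter bad).card ≤ ∑ s ∈ S, ((univ.filter (P s)).card) ^ m := by
    calc (univ.filter bad).card ≤ (S.biUnion B).card := Finset.card_le_card hsub
      _ ≤ ∑ s ∈ S, (B s).card := Finset.card_biUnion_le
      _ = ∑ s ∈ S, ((univ.filter (P s)).card) ^ m := by
          apply Finset.sum_congr rfl
          intro s _
          exact hBs s
  -- to reals
  have hreal : ((univ.filter bad).card : ℝ) ≤ (q:ℝ)^(n:ℕ) * ((5/8) * (q:ℝ)^(n:ℕ))^m := by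
    calc ((univ.filter bad).card : ℝ)
        ≤ (∑ s ∈ S, ((univ.filter (P s)).card) ^ m : ℕ) := by exact_mod_cast hnat
      _ = ∑ s ∈ S, (((univ.filter (P s)).card : ℝ)) ^ m := by push_cast; ring
      _ ≤ ∑ s ∈ S, ((5/8) * (q:ℝ)^(n:ℕ))^m := by
          apply Finset.sum_le_sum
          intro s hsS
          have hs0 : s ≠ 0 := by simpa [hS] using hsS
          exact pow_le_pow_left₀ (Nat.cast_nonneg _) (hgs s hs0) m
      _ = S.card * ((5/8) * (q:ℝ)^(n:ℕ))^m := by rw [Finset.sum_const, nsmul_eq_mul]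
      _ ≤ (q:ℝ)^(n:ℕ) * ((5/8) * (q:ℝ)^(n:ℕ))^m := by
          apply mul_le_mul_of_nonneg_right _ (by positivity)
          have h1 : S.card ≤ Fintype.card (Fin n → ZMod q) := by
            rw [← Finset.card_univ]
            exact Finset.card_le_card (Finset.subset_univ S)
          rw [Fintype.card_fun, ZMod.card, Fintype.card_fin] at h1
          exact_mod_cast h1
  rw [hcard]
  calc ((univ.filter bad).card : ℝ)
      ≤ (q:ℝ)^(n:ℕ) * ((5/8) * (q:ℝ)^(n:ℕ))^m := hreal
    _ = ((q:ℝ)^(n:ℕ) * (5/8:ℝ)^(m:ℕ)) * (q:ℝ)^(n*m) := by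
        rw [mul_pow, ← pow_mul]
        ring
    _ ≤ (q : ℝ) ^ (-(0.16) * (n : ℝ)) * (q : ℝ) ^ (n * m) := by
        apply mul_le_mul_of_nonneg_right (analytic_bound n m q hq hm) (by positivity)
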